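/- For any budget B ≥ 0, the supremum of clicks(A) over probability distributions A on nonnegative bids satisfying cost(A) ≤ B is attained, and it is attained by a distribution supported on at most two bids; moreover the optimal value equals the maximum of λ·α[i] + (1−λ)·α[j] over indices i, j and λ ∈ [0,1] with λ·cost-point[i] + (1−λ)·cost-point[j] ≤ B, where cost-point[i] = α[i]·b[i] (i.e., the value at B of the concave upper envelope of the landscape points). -/

import Mathlib

open MeasureTheory

section Land
variable (n : ℕ) (α b : Fin (n + 1) → ℝ)

noncomputable def landPos (n : ℕ) (b : Fin (n + 1) → ℝ) (x : ℝ) : Fin (n + 1) :=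
  if h : (Finset.univ.filter (fun i => b i ≤ x)).Nonempty
  then (Finset.univ.filter (fun i => b i ≤ x)).min' h
  else Fin.last n

lemma b_nonneg (hb : Antitone b) (hb0 : b (Fin.last n) = 0) (i : Fin (n+1)) : 0 ≤ b i :=
  hb0 ▸ hb (Fin.le_last i)

lemma landPos_spec (hb0 : b (Fin.last n) = 0) {x : ℝ} (hx : 0 ≤ x) :
    b (landPos n b x) ≤ x ∧ ∀ j, b j ≤ x → landPos n b x ≤ j := by
  have h : (Finset.univ.filter (fun i => b i ≤ x)).Nonempty :=
    ⟨Fin.last n, by simp [hb0, hx]⟩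
  rw [landPos, dif_pos h]
  constructor
  · have := Finset.min'_mem _ h
    simpa using this
  · intro j hj
    exact Finset.min'_le _ j (by simpa using hj)

lemma landPos_neg (hb : Antitone b) (hb0 : b (Fin.last n) = 0) {x : ℝ} (hx : x < 0) :
    landPos n b x = Fin.last n := by
  have hemp : ¬ (Finset.univ.filter (fun i => b i ≤ x)).Nonempty := by
    rintro ⟨i, hi⟩
    rw [Finset.mem_filter] at hi
    exact absurd hi.2 (not_le.2 (lt_of_lt_of_le hx (b_nonneg n b hb hb0 i)))
  rw [landPos, dif_neg hemp]

lemma landPos_eq_iff (hb0 : b (Fin.last n) = 0) {x : ℝ} (hx : 0 ≤ x) (i : Fin (n+1)) :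
    landPos n b x = i ↔ (b i ≤ x ∧ ∀ j, j < i → x < b j) := by
  obtain ⟨h1, h2⟩ := landPos_spec n b hb0 hx
  constructor
  · rintro rfl
    exact ⟨h1, fun j hj => by_contra fun hc => absurd (h2 j (le_of_not_gt hc)) (not_le.2 hj)⟩
  · rintro ⟨hbi, hlt⟩
    refine le_antisymm (h2 i hbi) ?_
    by_contra hc
    exact absurd h1 (not_le.2 (hlt _ (lt_of_not_ge hc)))

lemma measurableSet_landPos_fiber (hb : Antitone b) (hb0 : b (Fin.last n) = 0) (i : Fin (n+1)) :
    MeasurableSet {x : ℝ | landPos n b x = i} := by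
  have hset : {x : ℝ | landPos n b x = i} =
      ((Set.Ici (0:ℝ) ∩ Set.Ici (b i)) ∩ ⋂ j : Fin (n+1), {x | j < i → x < b j}) ∪
      (Set.Iio (0:ℝ) ∩ (if i = Fin.last n then Set.univ else ∅)) := by
    ext x
    rcases lt_or_ge x 0 with hx | hx
    · simp only [Set.mem_setOf_eq, landPos_neg n b hb hb0 hx, Set.mem_union, Set.mem_inter_iff,
        Set.mem_Ici, Set.mem_Iio, Set.mem_iInter]
      constructor
      · rintro rfl; right; simp [hx]
      · rintro (⟨⟨h, _⟩, _⟩ | ⟨_, h⟩)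
        · linarith
        · by_cases hi : i = Fin.last n
          · exact hi.symm
          · simp [hi] at h
    · rw [Set.mem_setOf_eq, landPos_eq_iff n b hb0 hx]
      simp only [Set.mem_union, Set.mem_inter_iff, Set.mem_Ici, Set.mem_Iio, Set.mem_iInter,
        Set.mem_setOf_eq]
      constructor
      · rintro ⟨h1, h2⟩; exact Or.inl ⟨⟨hx, h1⟩, h2⟩
      · rintro (⟨⟨_, h1⟩, h2⟩ | ⟨h, _⟩)
        · exact ⟨h1, h2⟩
        · linarith
  rw [hset]
  apply MeasurableSet.union
  · apply MeasurableSet.inter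
    · exact (measurableSet_Ici.inter measurableSet_Ici)
    · apply MeasurableSet.iInter
      intro j
      by_cases h : j < i
      · simp only [h, true_implies]; exact measurableSet_Iio
      · simp only [h, false_implies]; simp
  · by_cases h : i = Fin.last n <;> simp [h]

lemma landPos_rep (c : Fin (n+1) → ℝ) (x : ℝ) :
    c (landPos n b x) = ∑ i, Set.indicator {y : ℝ | landPos n b y = i} (fun _ => c i) x := by
  rw [Finset.sum_congr rfl (fun i _ => Set.indicator_apply _ _ _)]
  simp only [Set.mem_setOf_eq]
  rw [Finset.sum_ite_eq Finset.univ (landPos n b x) c]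
  simp

lemma integral_landPos_comp (hb : Antitone b) (hb0 : b (Fin.last n) = 0)
    (c : Fin (n+1) → ℝ) (ν : Measure ℝ) [IsFiniteMeasure ν] :
    ∫ x, c (landPos n b x) ∂ν =
      ∑ i, (ν {y : ℝ | landPos n b y = i}).toReal * c i := by
  have h1 : ∫ x, c (landPos n b x) ∂ν =
      ∑ i, ∫ x, Set.indicator {y : ℝ | landPos n b y = i} (fun _ => c i) x ∂ν := by
    rw [← integral_finset_sum]
    · exact integral_congr_ae (Filter.Eventually.of_forall fun x => landPos_rep n b c x)
    · intro i _
      exact (integrable_const (c i)).indicator (measurableSet_landPos_fiber n b hb hb0 i)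
  rw [h1]
  refine Finset.sum_congr rfl fun i _ => ?_
  rw [integral_indicator_const _ (measurableSet_landPos_fiber n b hb hb0 i)]
  simp [mul_comm, Measure.real]

end Land

noncomputable def landClicks (n : ℕ) (α b : Fin (n + 1) → ℝ) (x : ℝ) : ℝ :=
  α (landPos n b x)

noncomputable def landCost (n : ℕ) (α b : Fin (n + 1) → ℝ) (x : ℝ) : ℝ :=
  α (landPos n b x) * b (landPos n b x)

section LP
variable {ι : Type*} [Fintype ι] [DecidableEq ι]

lemma perturb (w v p d : ι → ℝ) (hp : ∀ i, 0 ≤ p i)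
    (hd0 : ∃ k, d k ≠ 0) (hdsupp : ∀ k, d k ≠ 0 → p k ≠ 0)
    (hdsum : ∑ k, d k = 0) (hdw : ∑ k, d k * w k = 0) (hdv : 0 ≤ ∑ k, d k * v k) :
    ∃ q : ι → ℝ, (∀ k, 0 ≤ q k) ∧ (∑ k, q k) = (∑ k, p k) ∧
      (∑ k, q k * w k) = (∑ k, p k * w k) ∧ (∑ k, p k * v k) ≤ (∑ k, q k * v k) ∧
      (Finset.univ.filter (fun k => q k ≠ 0)) ⊂ (Finset.univ.filter (fun k => p k ≠ 0)) := by
  classical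
  have hneg : ∃ k, d k < 0 := by
    by_contra hc
    push_neg at hc
    obtain ⟨k, hk⟩ := hd0
    have hpos : 0 < ∑ k, d k := by
      apply Finset.sum_pos' (fun i _ => hc i)
      refine ⟨k, Finset.mem_univ _, ?_⟩
      exact lt_of_le_of_ne (hc k) (Ne.symm hk)
    linarith [hdsum]
  set F := Finset.univ.filter (fun k => d k < 0) with hF
  have hFne : F.Nonempty := by
    obtain ⟨k, hk⟩ := hneg
    exact ⟨k, by simp [hF, hk]⟩
  obtain ⟨k0, hk0F, hk0min⟩ := Finset.exists_min_image F (fun k => p k / (-d k)) hFne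
  have hdk0 : d k0 < 0 := by simpa [hF] using hk0F
  set τ := p k0 / (-d k0) with hτ
  have hτ0 : 0 ≤ τ := div_nonneg (hp k0) (by linarith)
  have h5 : τ * -d k0 = p k0 := by
    rw [hτ]; exact div_mul_cancel₀ _ (by linarith : -d k0 ≠ 0)
  have hq0 : p k0 + τ * d k0 = 0 := by
    have h6 : τ * d k0 = -p k0 := by rw [← h5]; ring
    rw [h6]; ring
  refine ⟨fun k => p k + τ * d k, ?_, ?_, ?_, ?_, ?_⟩
  · intro k
    show 0 ≤ p k + τ * d k
    rcases le_or_gt 0 (d k) with h | h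
    · have : 0 ≤ τ * d k := mul_nonneg hτ0 h
      linarith [hp k]
    · have hkF : k ∈ F := by simp [hF, h]
      have hmin := hk0min k hkF
      have h2 : τ * (-d k) ≤ p k := by
        rw [hτ, ← le_div_iff₀ (by linarith : (0:ℝ) < -d k)]
        exact hmin
      nlinarith
  · rw [Finset.sum_add_distrib, ← Finset.mul_sum, hdsum]; ring
  · have he : ∀ k, (p k + τ * d k) * w k = p k * w k + τ * (d k * w k) := fun k => by ring
    simp only [he]
    rw [Finset.sum_add_distrib, ← Finset.mul_sum, hdw]; ring
  · have he : ∀ k, (p k + τ * d k) * v k = p k * v k + τ * (d k * v k) := fun k => by ring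
    simp only [he]
    rw [Finset.sum_add_distrib, ← Finset.mul_sum]
    nlinarith
  · rw [Finset.ssubset_iff_of_subset]
    · refine ⟨k0, ?_, ?_⟩
      · simp only [Finset.mem_filter, Finset.mem_univ, true_and]
        exact hdsupp k0 (ne_of_lt hdk0)
      · simp [hq0]
    · intro k hk
      simp only [Finset.mem_filter, Finset.mem_univ, true_and] at hk ⊢
      intro hpk
      rcases eq_or_ne (d k) 0 with h | h
      · exact hk (by rw [hpk, h]; ring)
      · exact hdsupp k h hpk

lemma reduce_aux (N : ℕ) : ∀ (w v p : ι → ℝ), (∀ i, 0 ≤ p i) → (∑ i, p i) = 1 →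
    (Finset.univ.filter (fun k => p k ≠ 0)).card ≤ N →
    ∃ (i j : ι) (t : ℝ), p i ≠ 0 ∧ p j ≠ 0 ∧ 0 ≤ t ∧ t ≤ 1 ∧
      t * w i + (1-t) * w j ≤ ∑ k, p k * w k ∧
      (∑ k, p k * v k) ≤ t * v i + (1-t) * v j := by
  induction N with
  | zero =>
    intro w v p hp hs hcard
    exfalso
    have hempty : Finset.univ.filter (fun k => p k ≠ 0) = ∅ :=
      Finset.card_eq_zero.mp (le_antisymm hcard (Nat.zero_le _))
    have hall : ∀ k, p k = 0 := by
      intro k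
      by_contra hk
      have hmem : k ∈ Finset.univ.filter (fun k => p k ≠ 0) := by simp [hk]
      rw [hempty] at hmem
      exact absurd hmem (Finset.notMem_empty k)
    rw [Finset.sum_congr rfl (fun k _ => hall k)] at hs
    simp at hs
  | succ N ih =>
    intro w v p hp hs hcard
    classical
    set S := Finset.univ.filter (fun k => p k ≠ 0) with hS
    have hzero : ∀ x, x ∉ S → p x = 0 := by
      intro x hx
      by_contra hpx
      exact hx (by simp [hS, hpx])
    have hsupp : ∀ f : ι → ℝ, (∑ k, p k * f k) = ∑ k ∈ S, p k * f k :=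
      fun f => (Finset.sum_subset (Finset.subset_univ S)
        (fun x _ hx => by rw [hzero x hx]; ring)).symm
    have hsupp1 : (∑ k, p k) = ∑ k ∈ S, p k :=
      (Finset.sum_subset (Finset.subset_univ S) (fun x _ hx => hzero x hx)).symm
    rcases lt_or_ge S.card 3 with hlt | hge
    · -- card ≤ 2 : direct
      interval_cases h : S.card
      · exfalso
        have hempty : S = ∅ := Finset.card_eq_zero.mp h
        rw [hsupp1, hempty] at hs
        simp at hs
      · obtain ⟨a, ha⟩ := Finset.card_eq_one.mp h
        have hpa : p a = 1 := by
          rw [hsupp1, ha, Finset.sum_singleton] at hs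
          exact hs
        have hane : p a ≠ 0 := by rw [hpa]; norm_num
        refine ⟨a, a, 1, hane, hane, by norm_num, le_refl 1, ?_, ?_⟩
        · rw [hsupp fun k => w k, ha, Finset.sum_singleton, hpa]; ring_nf; rfl
        · rw [hsupp fun k => v k, ha, Finset.sum_singleton, hpa]; ring_nf; rfl
      · obtain ⟨a, c, hac, hS2⟩ := Finset.card_eq_two.mp h
        have haS : a ∈ S := by rw [hS2]; simp
        have hcS : c ∈ S := by rw [hS2]; simp
        have hpa : p a ≠ 0 := by simpa [hS] using haS
        have hpc : p c ≠ 0 := by simpa [hS] using hcS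
        have hsum2 : p a + p c = 1 := by
          rw [hsupp1, hS2, Finset.sum_pair hac] at hs
          exact hs
        refine ⟨a, c, p a, hpa, hpc, hp a, by linarith [hp c], ?_, ?_⟩
        · have : (1 - p a) = p c := by linarith
          rw [this, hsupp fun k => w k, hS2, Finset.sum_pair hac]
        · have : (1 - p a) = p c := by linarith
          rw [this, hsupp fun k => v k, hS2, Finset.sum_pair hac]
    · -- card ≥ 3 : perturb and recurse
      obtain ⟨T, hTS, hT3⟩ := Finset.exists_subset_card_eq (s := S) (n := 3) hge
      obtain ⟨a, e, c, hab, hac, hbc, hTabc⟩ := Finset.card_eq_three.mp hT3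
      have haS : a ∈ S := hTS (by rw [hTabc]; simp)
      have heS : e ∈ S := hTS (by rw [hTabc]; simp)
      have hcS : c ∈ S := hTS (by rw [hTabc]; simp)
      have hpa : p a ≠ 0 := by simpa [hS] using haS
      have hpe : p e ≠ 0 := by simpa [hS] using heS
      have hpc : p c ≠ 0 := by simpa [hS] using hcS
      obtain ⟨c₁, c₂, c₃, hcne, hcsum, hcw⟩ :
          ∃ c₁ c₂ c₃ : ℝ, (c₁ ≠ 0 ∨ c₂ ≠ 0 ∨ c₃ ≠ 0) ∧ c₁ + c₂ + c₃ = 0 ∧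
            c₁ * w a + c₂ * w e + c₃ * w c = 0 := by
        by_cases hw : w a = w e
        · exact ⟨1, -1, 0, Or.inl one_ne_zero, by ring, by rw [hw]; ring⟩
        · exact ⟨w e - w c, w c - w a, w a - w e,
            Or.inr (Or.inr (sub_ne_zero.2 hw)), by ring, by ring⟩
      set d : ι → ℝ := fun k =>
        c₁ * (if k = a then 1 else 0) + c₂ * (if k = e then 1 else 0) +
          c₃ * (if k = c then 1 else 0) with hd
      have hda : d a = c₁ := by simp [hd, hab, hac]
      have hde : d e = c₂ := by simp [hd, Ne.symm hab, hbc]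
      have hdc : d c = c₃ := by simp [hd, Ne.symm hac, Ne.symm hbc]
      have hdmul : ∀ f : ι → ℝ, (∑ k, d k * f k) = c₁ * f a + c₂ * f e + c₃ * f c := by
        intro f
        have he' : ∀ k, d k * f k =
            c₁ * (if k = a then f k else 0) + c₂ * (if k = e then f k else 0) +
              c₃ * (if k = c then f k else 0) := by
          intro k
          simp only [hd]
          split_ifs <;> ring
        simp only [he']
        rw [Finset.sum_add_distrib, Finset.sum_add_distrib,
          ← Finset.mul_sum, ← Finset.mul_sum, ← Finset.mul_sum,
          Finset.sum_ite_eq' Finset.univ a f, Finset.sum_ite_eq' Finset.univ e f,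
          Finset.sum_ite_eq' Finset.univ c f]
        simp
      have hdsum : ∑ k, d k = 0 := by
        have := hdmul (fun _ => 1)
        simp only [mul_one] at this
        calc ∑ k, d k = ∑ k, d k * 1 := by simp
        _ = 0 := by rw [hdmul (fun _ => 1)]; simpa using hcsum
      have hdw : ∑ k, d k * w k = 0 := by rw [hdmul]; exact hcw
      have hd0 : ∃ k, d k ≠ 0 := by
        rcases hcne with h | h | h
        · exact ⟨a, by rw [hda]; exact h⟩
        · exact ⟨e, by rw [hde]; exact h⟩
        · exact ⟨c, by rw [hdc]; exact h⟩
      have hdsupp : ∀ k, d k ≠ 0 → p k ≠ 0 := by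
        intro k hk
        by_cases h1 : k = a
        · rw [h1]; exact hpa
        by_cases h2 : k = e
        · rw [h2]; exact hpe
        by_cases h3 : k = c
        · rw [h3]; exact hpc
        exact absurd (by simp [hd, h1, h2, h3]) hk
      have hq : ∃ q : ι → ℝ, (∀ k, 0 ≤ q k) ∧ (∑ k, q k) = (∑ k, p k) ∧
          (∑ k, q k * w k) = (∑ k, p k * w k) ∧ (∑ k, p k * v k) ≤ (∑ k, q k * v k) ∧
          (Finset.univ.filter (fun k => q k ≠ 0)) ⊂ (Finset.univ.filter (fun k => p k ≠ 0)) := by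
        rcases le_or_gt 0 (∑ k, d k * v k) with hv | hv
        · exact perturb w v p d hp hd0 hdsupp hdsum hdw hv
        · refine perturb w v p (-d) hp ?_ ?_ ?_ ?_ ?_
          · obtain ⟨k, hk⟩ := hd0
            exact ⟨k, by simpa using hk⟩
          · intro k hk
            exact hdsupp k (by simpa using hk)
          · simp [Finset.sum_neg_distrib, hdsum]
          · have : ∀ k, (-d) k * w k = -(d k * w k) := fun k => by simp
            simp only [this]
            rw [Finset.sum_neg_distrib, hdw]
            ring
          · have : ∀ k, (-d) k * v k = -(d k * v k) := fun k => by simp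
            simp only [this]
            rw [Finset.sum_neg_distrib]
            linarith
      obtain ⟨q, hq0', hqsum, hqw, hqv, hqss⟩ := hq
      have hcardq : (Finset.univ.filter (fun k => q k ≠ 0)).card ≤ N := by
        have h1 := Finset.card_lt_card hqss
        rw [← hS] at h1
        omega
      obtain ⟨i, j, t, hqi, hqj, ht0, ht1, hcost, hval⟩ :=
        ih w v q hq0' (by rw [hqsum]; exact hs) hcardq
      have hsubset := hqss.subset
      have hpi : p i ≠ 0 := by
        have : i ∈ Finset.univ.filter (fun k => p k ≠ 0) := hsubset (by simp [hqi])
        simpa using this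
      have hpj : p j ≠ 0 := by
        have : j ∈ Finset.univ.filter (fun k => p k ≠ 0) := hsubset (by simp [hqj])
        simpa using this
      exact ⟨i, j, t, hpi, hpj, ht0, ht1, by rw [← hqw]; exact hcost,
        le_trans hqv hval⟩

lemma reduce (w v p : ι → ℝ) (hp : ∀ i, 0 ≤ p i) (hs : (∑ i, p i) = 1) :
    ∃ (i j : ι) (t : ℝ), p i ≠ 0 ∧ p j ≠ 0 ∧ 0 ≤ t ∧ t ≤ 1 ∧
      t * w i + (1-t) * w j ≤ ∑ k, p k * w k ∧
      (∑ k, p k * v k) ≤ t * v i + (1-t) * v j :=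
  reduce_aux (Finset.univ.filter (fun k => p k ≠ 0)).card w v p hp hs (le_refl _)

end LP

lemma pairOpt (wi wj vi vj B t : ℝ) (ht0 : 0 ≤ t) (ht1 : t ≤ 1)
    (hfeas : t * wi + (1 - t) * wj ≤ B) :
    ∃ t', (t' = 0 ∨ t' = 1 ∨ t' = min 1 (max 0 ((B - wj) / (wi - wj)))) ∧
      0 ≤ t' ∧ t' ≤ 1 ∧ t' * wi + (1 - t') * wj ≤ B ∧
      t * vi + (1 - t) * vj ≤ t' * vi + (1 - t') * vj := by
  rcases le_or_gt vj vi with hv | hv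
  · -- increase t
    rcases le_or_gt wi wj with hw | hw
    · refine ⟨1, Or.inr (Or.inl rfl), by norm_num, le_refl 1, ?_, ?_⟩
      · nlinarith
      · nlinarith
    · -- wj < wi
      set x := (B - wj) / (wi - wj) with hx
      have hxt : t ≤ x := by
        rw [hx, le_div_iff₀ (by linarith : (0:ℝ) < wi - wj)]
        nlinarith
      have hx0 : 0 ≤ x := le_trans ht0 hxt
      have hmax : max 0 x = x := max_eq_right hx0
      set t' := min 1 x with ht'
      refine ⟨t', Or.inr (Or.inr (by rw [ht', hmax])), ?_, min_le_left 1 x, ?_, ?_⟩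
      · exact le_min (by norm_num) hx0
      · have h1 : t' ≤ x := min_le_right 1 x
        have h2 : t' * (wi - wj) ≤ B - wj := by
          rw [← div_mul_cancel₀ (B - wj) (by linarith : wi - wj ≠ 0)]
          exact mul_le_mul_of_nonneg_right (by rw [hx] at h1; exact h1) (by linarith)
        nlinarith
      · have h3 : t ≤ t' := le_min ht1 hxt
        nlinarith
  · -- decrease t
    rcases le_or_gt wj wi with hw | hw
    · refine ⟨0, Or.inl rfl, le_refl 0, by norm_num, ?_, ?_⟩
      · nlinarith
      · nlinarith
    · -- wi < wj
      set x := (B - wj) / (wi - wj) with hx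
      have hxt : x ≤ t := by
        rw [hx, div_le_iff_of_neg (by linarith : wi - wj < 0)]
        nlinarith
      have hx1 : x ≤ 1 := le_trans hxt ht1
      set t' := max 0 x with ht'
      have hcand : t' = min 1 (max 0 x) := by
        rw [ht']
        rcases le_or_gt x 0 with h | h
        · rw [max_eq_left h]; norm_num
        · rw [max_eq_right (le_of_lt h), min_eq_right hx1]
      refine ⟨t', Or.inr (Or.inr hcand), le_max_left 0 x, ?_, ?_, ?_⟩
      · exact max_le (by norm_num) hx1
      · rcases le_or_gt x 0 with h | h
        · have ht'0 : t' = 0 := by rw [ht', max_eq_left h]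
          have hwjB : wj ≤ B := by
            rw [hx, div_nonpos_iff] at h
            rcases h with ⟨h1, h2⟩ | ⟨h1, h2⟩
            · nlinarith
            · linarith
          rw [ht'0]; linarith
        · have ht'x : t' = x := by rw [ht', max_eq_right (le_of_lt h)]
          rw [ht'x]
          have : x * (wi - wj) = B - wj := by
            rw [hx]; exact div_mul_cancel₀ _ (by linarith : wi - wj ≠ 0)
          nlinarith
      · have h3 : t' ≤ t := max_le ht0 hxt
        nlinarith

section TwoPoint
variable (n : ℕ) (b : Fin (n + 1) → ℝ)

lemma twoPoint_prob (x y l : ℝ) (hl0 : 0 ≤ l) (hl1 : l ≤ 1) :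
    IsProbabilityMeasure
      (ENNReal.ofReal l • Measure.dirac x + ENNReal.ofReal (1 - l) • Measure.dirac y) := by
  constructor
  rw [Measure.add_apply, Measure.smul_apply, Measure.smul_apply, measure_univ, measure_univ,
    smul_eq_mul, smul_eq_mul, mul_one, mul_one, ← ENNReal.ofReal_add hl0 (by linarith)]
  norm_num

lemma twoPoint_integral (hb : Antitone b) (hb0 : b (Fin.last n) = 0)
    (c : Fin (n + 1) → ℝ) (x y l : ℝ) (hl0 : 0 ≤ l) (hl1 : l ≤ 1) :
    ∫ z, c (landPos n b z)
        ∂(ENNReal.ofReal l • Measure.dirac x + ENNReal.ofReal (1 - l) • Measure.dirac y)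
      = l * c (landPos n b x) + (1 - l) * c (landPos n b y) := by
  set μ := ENNReal.ofReal l • Measure.dirac x + ENNReal.ofReal (1 - l) • Measure.dirac y with hμ
  have hprob : IsProbabilityMeasure μ := twoPoint_prob x y l hl0 hl1
  rw [integral_landPos_comp n b hb hb0 c μ]
  have hμA : ∀ i, (μ {z : ℝ | landPos n b z = i}).toReal
      = l * (if landPos n b x = i then 1 else 0)
        + (1 - l) * (if landPos n b y = i then 1 else 0) := by
    intro i
    have hA := measurableSet_landPos_fiber n b hb hb0 i
    rw [hμ, Measure.add_apply, Measure.smul_apply, Measure.smul_apply,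
      Measure.dirac_apply' _ hA, Measure.dirac_apply' _ hA, smul_eq_mul, smul_eq_mul,
      Set.indicator_apply, Set.indicator_apply]
    simp only [Set.mem_setOf_eq, Pi.one_apply]
    have hl1' : (0:ℝ) ≤ 1 - l := by linarith
    split_ifs with h1 h2 <;>
      simp [ENNReal.toReal_add, ENNReal.toReal_mul, ENNReal.toReal_ofReal, hl0, hl1',
        ENNReal.mul_ne_top, ENNReal.ofReal_ne_top]
  simp only [hμA]
  have hterm : ∀ i, (l * (if landPos n b x = i then (1:ℝ) else 0)
      + (1 - l) * (if landPos n b y = i then 1 else 0)) * c i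
      = (if landPos n b x = i then l * c i else 0)
        + (if landPos n b y = i then (1 - l) * c i else 0) := by
    intro i; split_ifs <;> ring
  simp only [hterm]
  rw [Finset.sum_add_distrib, Finset.sum_ite_eq Finset.univ (landPos n b x) (fun i => l * c i),
    Finset.sum_ite_eq Finset.univ (landPos n b y) (fun i => (1 - l) * c i)]
  simp

lemma twoPoint_ae_nonneg (x y l : ℝ) (hx : 0 ≤ x) (hy : 0 ≤ y) :
    ∀ᵐ z ∂(ENNReal.ofReal l • Measure.dirac x + ENNReal.ofReal (1 - l) • Measure.dirac y),
      0 ≤ z := by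
  rw [ae_iff]
  have hS : {z : ℝ | ¬ 0 ≤ z} = Set.Iio 0 := by ext z; simp [not_le]
  rw [hS, Measure.add_apply, Measure.smul_apply, Measure.smul_apply,
    Measure.dirac_apply' _ measurableSet_Iio, Measure.dirac_apply' _ measurableSet_Iio]
  rw [Set.indicator_apply, Set.indicator_apply]
  simp [Set.mem_Iio, not_lt.2 hx, not_lt.2 hy]

lemma prob_partition (hb : Antitone b) (hb0 : b (Fin.last n) = 0)
    (ν : Measure ℝ) [IsProbabilityMeasure ν] :
    ∑ i, (ν {z : ℝ | landPos n b z = i}).toReal = 1 := by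
  have hU : (⋃ i, {z : ℝ | landPos n b z = i}) = Set.univ := by
    ext z; simp only [Set.mem_iUnion, Set.mem_setOf_eq, Set.mem_univ, iff_true]
    exact ⟨landPos n b z, rfl⟩
  have hdis : Pairwise (Function.onFun Disjoint (fun i => {z : ℝ | landPos n b z = i})) := by
    intro i j hij
    simp only [Function.onFun, Set.disjoint_left, Set.mem_setOf_eq]
    rintro z rfl h2
    exact hij h2
  have hmeas := measurableSet_landPos_fiber n b hb hb0
  have h1 := measure_iUnion hdis hmeas (μ := ν)
  rw [hU, measure_univ, tsum_fintype] at h1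
  have h2 := congrArg ENNReal.toReal h1
  rw [ENNReal.toReal_one, ENNReal.toReal_sum (fun i _ => measure_ne_top ν _)] at h2
  exact h2.symm

end TwoPoint
/-- For any budget `B ≥ 0`, the supremum of expected clicks over probability
distributions on nonnegative bids with expected cost at most `B` is attained
by a distribution supported on at most two bids, and the optimal value is the
maximum of `λ·α i + (1−λ)·α j` over convex combinations of two landscape
points whose cost combination is within budget. -/
theorem single_query_two_point_optimum (n : ℕ) (α b : Fin (n + 1) → ℝ)
    (hα : Antitone α) (hb : Antitone b)
    (hα0 : α (Fin.last n) = 0) (hb0 : b (Fin.last n) = 0)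
    (B : ℝ) (hB : 0 ≤ B) :
    ∃ x y l : ℝ, 0 ≤ x ∧ 0 ≤ y ∧ 0 ≤ l ∧ l ≤ 1 ∧
      (let μ : Measure ℝ :=
        ENNReal.ofReal l • Measure.dirac x + ENNReal.ofReal (1 - l) • Measure.dirac y
      (∫ z, landCost n α b z ∂μ) ≤ B ∧
      IsGreatest {r : ℝ | ∃ ν : Measure ℝ, IsProbabilityMeasure ν ∧
          (∀ᵐ z ∂ν, 0 ≤ z) ∧ (∫ z, landCost n α b z ∂ν) ≤ B ∧
          r = ∫ z, landClicks n α b z ∂ν}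
        (∫ z, landClicks n α b z ∂μ) ∧
      IsGreatest {r : ℝ | ∃ (i j : Fin (n + 1)) (t : ℝ), 0 ≤ t ∧ t ≤ 1 ∧
          t * (α i * b i) + (1 - t) * (α j * b j) ≤ B ∧
          r = t * α i + (1 - t) * α j}
        (∫ z, landClicks n α b z ∂μ)) := by
  classical
  have hαn : ∀ i, 0 ≤ α i := fun i => hα0 ▸ hα (Fin.le_last i)
  have hbn : ∀ i, 0 ≤ b i := b_nonneg n b hb hb0
  -- finite candidate set for the optimum
  set F : Finset ℝ := (Finset.univ ×ˢ Finset.univ).biUnion (fun ij : Fin (n+1) × Fin (n+1) =>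
    (({0, 1, min 1 (max 0 ((B - α ij.2 * b ij.2) / (α ij.1 * b ij.1 - α ij.2 * b ij.2)))} :
        Finset ℝ).filter (fun t =>
      0 ≤ t ∧ t ≤ 1 ∧ t * (α ij.1 * b ij.1) + (1 - t) * (α ij.2 * b ij.2) ≤ B)).image
        (fun t => t * α ij.1 + (1 - t) * α ij.2)) with hF
  have hFne : F.Nonempty := by
    refine ⟨1 * α (Fin.last n) + (1 - 1) * α (Fin.last n), ?_⟩
    rw [hF]
    refine Finset.mem_biUnion.mpr ⟨(Fin.last n, Fin.last n),
      Finset.mem_product.mpr ⟨Finset.mem_univ _, Finset.mem_univ _⟩,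
      Finset.mem_image.mpr ⟨1, Finset.mem_filter.mpr ⟨by simp, ?_⟩, rfl⟩⟩
    refine ⟨by norm_num, le_refl 1, ?_⟩
    simp [hα0]
    exact hB
  set M : ℝ := F.max' hFne with hM
  -- upper bound: every feasible two-point combination is at most M
  have hub : ∀ (i j : Fin (n+1)) (t : ℝ), 0 ≤ t → t ≤ 1 →
      t * (α i * b i) + (1 - t) * (α j * b j) ≤ B → t * α i + (1 - t) * α j ≤ M := by
    intro i j t ht0 ht1 hf
    obtain ⟨t', hmem, h0, h1, hfe, hval⟩ :=
      pairOpt (α i * b i) (α j * b j) (α i) (α j) B t ht0 ht1 hf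
    have hmemF : t' * α i + (1 - t') * α j ∈ F := by
      rw [hF]
      refine Finset.mem_biUnion.mpr ⟨(i, j),
        Finset.mem_product.mpr ⟨Finset.mem_univ _, Finset.mem_univ _⟩,
        Finset.mem_image.mpr ⟨t', Finset.mem_filter.mpr ⟨?_, h0, h1, hfe⟩, rfl⟩⟩
      rcases hmem with h | h | h <;> simp [h]
    exact le_trans hval (F.le_max' _ hmemF)
  -- M is attained by some feasible pair
  have hMmem : M ∈ F := F.max'_mem hFne
  rw [hF] at hMmem
  simp only [Finset.mem_biUnion, Finset.mem_image, Finset.mem_filter, Finset.mem_product] at hMmem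
  obtain ⟨⟨i, j⟩, -, t, ⟨-, ht0, ht1, htf⟩, hMval⟩ := hMmem
  simp only at htf hMval
  -- upper bound for all probability measures
  have hmub : ∀ ν : Measure ℝ, IsProbabilityMeasure ν →
      (∫ z, landCost n α b z ∂ν) ≤ B → (∫ z, landClicks n α b z ∂ν) ≤ M := by
    intro ν hν hcν
    have hckν : ∫ z, landClicks n α b z ∂ν
        = ∑ i, (ν {z : ℝ | landPos n b z = i}).toReal * α i := by
      simp only [landClicks]
      exact integral_landPos_comp n b hb hb0 α ν
    have hcsν : ∫ z, landCost n α b z ∂ν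
        = ∑ i, (ν {z : ℝ | landPos n b z = i}).toReal * (α i * b i) := by
      simp only [landCost]
      exact integral_landPos_comp n b hb hb0 (fun i => α i * b i) ν
    set p : Fin (n+1) → ℝ := fun i => (ν {z : ℝ | landPos n b z = i}).toReal with hp
    have hp0 : ∀ i, 0 ≤ p i := fun i => ENNReal.toReal_nonneg
    have hp1 : ∑ i, p i = 1 := prob_partition n b hb hb0 ν
    obtain ⟨i', j', t', -, -, ht'0, ht'1, hcost', hval'⟩ :=
      reduce (fun i => α i * b i) α p hp0 hp1
    try simp only at hcost' hval'
    have hcB : t' * (α i' * b i') + (1 - t') * (α j' * b j') ≤ B := by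
      rw [hcsν] at hcν
      exact le_trans hcost' hcν
    rw [hckν]
    exact le_trans hval' (hub i' j' t' ht'0 ht'1 hcB)
  -- good (achievable) indices
  have hspec : ∀ i : Fin (n+1), b (landPos n b (b i)) ≤ b i ∧
      ∀ j, b j ≤ b i → landPos n b (b i) ≤ j := fun i => landPos_spec n b hb0 (hbn i)
  have hrle : ∀ i, landPos n b (b i) ≤ i := fun i => (hspec i).2 i (le_refl _)
  have hgood : ∀ i, landPos n b (b (landPos n b (b i))) = landPos n b (b i) := by
    intro i
    refine le_antisymm ((hspec (landPos n b (b i))).2 _ (le_refl _)) ?_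
    exact (hspec i).2 _ (le_trans (hspec (landPos n b (b i))).1 (hspec i).1)
  -- build a good-supported feasible vector with value ≥ M
  set ri := landPos n b (b i) with hri
  set rj := landPos n b (b j) with hrj
  set g0 := landPos n b (b (Fin.last n)) with hg0
  have hg0good : landPos n b (b g0) = g0 := hgood (Fin.last n)
  have hbg0 : b g0 = 0 := by
    have h := (hspec (Fin.last n)).1
    exact le_antisymm (le_trans h (le_of_eq hb0)) (hbn g0)
  have hseq : ∀ k : Fin (n+1), (α k / α (landPos n b (b k))) * α (landPos n b (b k)) = α k := by
    intro k
    rcases eq_or_ne (α (landPos n b (b k))) 0 with h | h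
    · have hk0 : α k = 0 := le_antisymm (h ▸ hα (hrle k)) (hαn k)
      rw [h, hk0]; ring
    · exact div_mul_cancel₀ _ h
  have hs01 : ∀ k : Fin (n+1), 0 ≤ α k / α (landPos n b (b k)) ∧
      α k / α (landPos n b (b k)) ≤ 1 := by
    intro k
    constructor
    · exact div_nonneg (hαn k) (hαn _)
    · rcases eq_or_ne (α (landPos n b (b k))) 0 with h | h
      · rw [h, div_zero]; norm_num
      · rw [div_le_one (lt_of_le_of_ne (hαn _) (Ne.symm h))]
        exact hα (hrle k)
  set sI := α i / α ri with hsI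
  set sJ := α j / α rj with hsJ
  set q : Fin (n+1) → ℝ := fun k =>
    t * sI * (if k = ri then 1 else 0) + (1 - t) * sJ * (if k = rj then 1 else 0) +
      (t * (1 - sI) + (1 - t) * (1 - sJ)) * (if k = g0 then 1 else 0) with hq
  have hite : ∀ (P : Prop) [Decidable P], (0:ℝ) ≤ if P then 1 else 0 := by
    intro P _; split <;> norm_num
  have hq0 : ∀ k, 0 ≤ q k := by
    intro k
    rw [hq]
    have h1 := (hs01 i).1; have h2 := (hs01 i).2
    have h3 := (hs01 j).1; have h4 := (hs01 j).2
    rw [← hsI, ← hsJ] at *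
    refine add_nonneg (add_nonneg ?_ ?_) ?_
    · exact mul_nonneg (mul_nonneg ht0 h1) (hite _)
    · exact mul_nonneg (mul_nonneg (by linarith) h3) (hite _)
    · refine mul_nonneg ?_ (hite _)
      nlinarith
  have hqmul : ∀ f : Fin (n+1) → ℝ, (∑ k, q k * f k)
      = t * sI * f ri + (1 - t) * sJ * f rj +
        (t * (1 - sI) + (1 - t) * (1 - sJ)) * f g0 := by
    intro f
    have he : ∀ k, q k * f k =
        (if k = ri then t * sI * f k else 0) + (if k = rj then (1 - t) * sJ * f k else 0) +
          (if k = g0 then (t * (1 - sI) + (1 - t) * (1 - sJ)) * f k else 0) := by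
      intro k
      simp only [hq]
      split_ifs <;> ring
    simp only [he]
    rw [Finset.sum_add_distrib, Finset.sum_add_distrib,
      Finset.sum_ite_eq' Finset.univ ri (fun k => t * sI * f k),
      Finset.sum_ite_eq' Finset.univ rj (fun k => (1 - t) * sJ * f k),
      Finset.sum_ite_eq' Finset.univ g0 (fun k => (t * (1 - sI) + (1 - t) * (1 - sJ)) * f k)]
    simp
  have hqsum : ∑ k, q k = 1 := by
    have := hqmul (fun _ => 1)
    have h2 : ∑ k, q k = ∑ k, q k * (fun _ => (1:ℝ)) k := by simp
    rw [h2, this]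
    ring
  have hqw : ∑ k, q k * (α k * b k) ≤ B := by
    rw [hqmul (fun k => α k * b k)]
    have hwg0 : α g0 * b g0 = 0 := by rw [hbg0]; ring
    have hwi : sI * (α ri * b ri) ≤ α i * b i := by
      have h1 : sI * α ri = α i := by rw [hsI]; exact hseq i
      calc sI * (α ri * b ri) = (sI * α ri) * b ri := by ring
      _ = α i * b ri := by rw [h1]
      _ ≤ α i * b i := mul_le_mul_of_nonneg_left (hspec i).1 (hαn i)
    have hwj : sJ * (α rj * b rj) ≤ α j * b j := by
      have h1 : sJ * α rj = α j := by rw [hsJ]; exact hseq j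
      calc sJ * (α rj * b rj) = (sJ * α rj) * b rj := by ring
      _ = α j * b rj := by rw [h1]
      _ ≤ α j * b j := mul_le_mul_of_nonneg_left (hspec j).1 (hαn j)
    have e1 : t * (sI * (α ri * b ri)) ≤ t * (α i * b i) :=
      mul_le_mul_of_nonneg_left hwi ht0
    have e2 : (1 - t) * (sJ * (α rj * b rj)) ≤ (1 - t) * (α j * b j) :=
      mul_le_mul_of_nonneg_left hwj (by linarith)
    simp only [hbg0, mul_zero, add_zero]
    nlinarith [e1, e2, htf]
  have hqα : M ≤ ∑ k, q k * α k := by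
    rw [hqmul α]
    have h1 : sI * α ri = α i := by rw [hsI]; exact hseq i
    have h2 : sJ * α rj = α j := by rw [hsJ]; exact hseq j
    have h5 := (hs01 i).2; have h6 := (hs01 j).2
    rw [← hsI] at h5; rw [← hsJ] at h6
    have h7 : 0 ≤ (t * (1 - sI) + (1 - t) * (1 - sJ)) * α g0 := by
      refine mul_nonneg ?_ (hαn g0)
      nlinarith
    rw [← hMval]
    have e1 : t * (sI * α ri) = t * α i := by rw [h1]
    have e2 : (1 - t) * (sJ * α rj) = (1 - t) * α j := by rw [h2]
    nlinarith [h7, e1, e2]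
  -- reduce to a two-point good-supported solution
  obtain ⟨i', j', t', hqi', hqj', ht'0, ht'1, hcost', hval'⟩ :=
    reduce (fun k => α k * b k) α q hq0 hqsum
  try simp only at hcost' hval'
  have hgood' : ∀ k, q k ≠ 0 → landPos n b (b k) = k := by
    intro k hk
    by_cases h1 : k = ri
    · rw [h1, hri]; exact hgood i
    by_cases h2 : k = rj
    · rw [h2, hrj]; exact hgood j
    by_cases h3 : k = g0
    · rw [h3]; exact hg0good
    · exfalso; apply hk; rw [hq]; simp [h1, h2, h3]
  have hgi' : landPos n b (b i') = i' := hgood' i' hqi'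
  have hgj' : landPos n b (b j') = j' := hgood' j' hqj'
  have hcB' : t' * (α i' * b i') + (1 - t') * (α j' * b j') ≤ B := le_trans hcost' hqw
  have hMle : M ≤ t' * α i' + (1 - t') * α j' := le_trans hqα hval'
  have hVeq : t' * α i' + (1 - t') * α j' = M :=
    le_antisymm (hub i' j' t' ht'0 ht'1 hcB') hMle
  -- the optimal two-point measure
  refine ⟨b i', b j', t', hbn i', hbn j', ht'0, ht'1, ?_⟩
  have hclicksμ : (∫ z, landClicks n α b z
      ∂(ENNReal.ofReal t' • Measure.dirac (b i') + ENNReal.ofReal (1 - t') • Measure.dirac (b j')))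
      = t' * α i' + (1 - t') * α j' := by
    simp only [landClicks]
    rw [twoPoint_integral n b hb hb0 α (b i') (b j') t' ht'0 ht'1, hgi', hgj']
  have hcostμ : (∫ z, landCost n α b z
      ∂(ENNReal.ofReal t' • Measure.dirac (b i') + ENNReal.ofReal (1 - t') • Measure.dirac (b j')))
      = t' * (α i' * b i') + (1 - t') * (α j' * b j') := by
    simp only [landCost]
    rw [twoPoint_integral n b hb hb0 (fun k => α k * b k) (b i') (b j') t' ht'0 ht'1, hgi', hgj']
  refine ⟨by rw [hcostμ]; exact hcB', ⟨?_, ?_⟩, ⟨?_, ?_⟩⟩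
  · -- membership in the measure set
    exact ⟨_, twoPoint_prob (b i') (b j') t' ht'0 ht'1,
      twoPoint_ae_nonneg (b i') (b j') t' (hbn i') (hbn j'), by rw [hcostμ]; exact hcB', rfl⟩
  · -- upper bound over measures
    rintro r ⟨ν, hν, -, hcν, rfl⟩
    rw [hclicksμ, hVeq]
    exact hmub ν hν hcν
  · -- membership in the pair set
    exact ⟨i', j', t', ht'0, ht'1, hcB', hclicksμ⟩
  · -- upper bound over pairs
    rintro r ⟨i0, j0, t0, h0, h1, hf, rfl⟩
    rw [hclicksμ, hVeq]
    exact hub i0 j0 t0 h0 h1 hf
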